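/- Let n ≥ 2 and let {H_iα_i}_{i=1}^{s} be a coset partition of the free group F_n, where H_i < F_n has finite index d_i > 1 and α_i ∈ F_n. Let N = ⋂_{i=1}^{s} ⋂_{g ∈ F_n} g⁻¹H_ig (the intersection of the normal cores of the H_i), a normal subgroup of finite index in F_n. Let w ∈ F_n with w ∉ ⋂_{i=1}^{s} α_i⁻¹H_iα_i, let o_N be the least positive integer with w^{o_N} ∈ N, and let o_{*i}(w) be the least positive integer m with w^m ∈ α_i⁻¹H_iα_i. Then for every y ∈ F_n, setting Y(y) = {1 ≤ i ≤ s : y w^j ∈ H_iα_i for some integer j}, one has Σ_{i ∈ Y(y)} o_N / o_{*i}(w) = o_N. -/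
import Mathlib

open scoped Classical in
private lemma pow_mem_iff_dvd' {G : Type*} [Group G] {K : Subgroup G} {c : G} {q : ℕ}
    (hq : IsLeast {m : ℕ | 0 < m ∧ c ^ m ∈ K} q) (m : ℕ) : c ^ m ∈ K ↔ q ∣ m := by
  obtain ⟨⟨hqpos, hqmem⟩, hqlb⟩ := hq
  constructor
  · intro hm
    by_contra hnd
    have hr0 : m % q ≠ 0 := fun h => hnd (Nat.dvd_of_mod_eq_zero h)
    have hrlt : m % q < q := Nat.mod_lt _ hqpos
    have h2 : c ^ (m % q) * (c ^ q) ^ (m / q) = c ^ m := by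
      rw [← pow_mul, ← pow_add, Nat.mod_add_div]
    have hmem : c ^ (m % q) ∈ K := by
      have h1 : c ^ m * ((c ^ q) ^ (m / q))⁻¹ ∈ K :=
        mul_mem hm (inv_mem (pow_mem hqmem _))
      rw [eq_mul_inv_of_mul_eq h2]
      exact h1
    exact absurd (hqlb ⟨Nat.pos_of_ne_zero hr0, hmem⟩) (not_le.mpr hrlt)
  · rintro ⟨k, rfl⟩
    rw [pow_mul]
    exact pow_mem hqmem k

private lemma zpow_mem_iff_dvd' {G : Type*} [Group G] {K : Subgroup G} {c : G} {q : ℕ}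
    (hq : IsLeast {m : ℕ | 0 < m ∧ c ^ m ∈ K} q) (m : ℤ) : c ^ m ∈ K ↔ (q : ℤ) ∣ m := by
  have hqpos : 0 < q := hq.1.1
  have hqz : (q : ℤ) ≠ 0 := by exact_mod_cast hqpos.ne'
  have hq' : c ^ (q : ℤ) ∈ K := by rw [zpow_natCast]; exact hq.1.2
  have hsplit : c ^ m = c ^ ((q : ℤ) * (m / q)) * c ^ (m % q) := by
    rw [← zpow_add, Int.mul_ediv_add_emod]
  have hmem1 : c ^ ((q : ℤ) * (m / q)) ∈ K := by
    rw [zpow_mul]; exact zpow_mem hq' _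
  have key : c ^ m ∈ K ↔ c ^ (m % q) ∈ K := by
    rw [hsplit, K.mul_mem_cancel_left hmem1]
  have h0 : 0 ≤ m % q := Int.emod_nonneg _ hqz
  have hlt : m % q < q := Int.emod_lt_of_pos _ (by exact_mod_cast hqpos)
  have htn : ((m % q).toNat : ℤ) = m % q := Int.toNat_of_nonneg h0
  have h2 : c ^ (m % q) = c ^ ((m % q).toNat) := by
    rw [← zpow_natCast, htn]
  rw [key, h2, pow_mem_iff_dvd' hq]
  constructor
  · intro hd
    have h5 : (m % q).toNat < q := by omega
    have h6 : (m % q).toNat = 0 := Nat.eq_zero_of_dvd_of_lt hd h5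
    have hm0 : m % q = 0 := by omega
    exact Int.dvd_of_emod_eq_zero hm0
  · intro hd
    have hm0 : m % q = 0 := Int.emod_eq_zero_of_dvd hd
    simp [hm0]

private lemma card_filter_mod' {q r N : ℕ} (hq : 0 < q) (hr : r < q) (hN : q ∣ N) :
    ((Finset.range N).filter (fun j => j % q = r)).card = N / q := by
  rw [← Finset.card_range (N / q)]
  apply Finset.card_bij' (fun j _ => j / q) (fun k _ => r + k * q)
  · intro j hj
    simp only [Finset.mem_filter, Finset.mem_range] at hj
    simp only [Finset.mem_range]
    exact Nat.div_lt_div_of_lt_of_dvd hN hj.1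
  · intro k hk
    simp only [Finset.mem_range] at hk
    simp only [Finset.mem_filter, Finset.mem_range]
    constructor
    · calc r + k * q < q + k * q := by omega
        _ = (k + 1) * q := by ring
        _ ≤ (N / q) * q := Nat.mul_le_mul_right _ (by omega)
        _ = N := Nat.div_mul_cancel hN
    · rw [Nat.add_mul_mod_self_right, Nat.mod_eq_of_lt hr]
  · intro j hj
    simp only [Finset.mem_filter, Finset.mem_range] at hj
    rw [← hj.2]
    exact Nat.mod_add_div' j q
  · intro k _
    rw [Nat.add_mul_div_right _ _ hq, Nat.div_eq_of_lt hr, Nat.zero_add]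

open scoped Classical in
/-- For a coset partition `{H i • α i}` of `F n`, `N` the intersection of the
normal cores of the `H i`, and `w ∉ ⋂ α_i⁻¹ H_i α_i` with `oN` the least positive integer
such that `w ^ oN ∈ N` and `o i` the least positive integer with `w ^ (o i) ∈ α_i⁻¹ H_i α_i`:
for every `y`, summing over the set `Y(y)` of indices `i` whose coset `H i • α i` meets the
`w`-orbit of `y`, one has `Σ_{i ∈ Y(y)} oN / o i = oN`. -/
theorem loop_equation
    (n s : ℕ) (hn : 2 ≤ n)
    (H : Fin s → Subgroup (FreeGroup (Fin n)))
    (α : Fin s → FreeGroup (Fin n))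
    (d : Fin s → ℕ)
    (hind : ∀ i, (H i).index = d i)
    (hone : ∀ i, 1 < d i)
    (hpart : ∀ x : FreeGroup (Fin n), ∃! i : Fin s, x * (α i)⁻¹ ∈ H i)
    (w : FreeGroup (Fin n))
    (hw : ¬ ∀ i, α i * w * (α i)⁻¹ ∈ H i)
    (oN : ℕ)
    (hoN : IsLeast {o : ℕ | 0 < o ∧
        w ^ o ∈ ⨅ i : Fin s, ⨅ u : FreeGroup (Fin n),
          (H i).comap ((MulAut.conj u).toMonoidHom)} oN)
    (o : Fin s → ℕ)
    (ho : ∀ i, IsLeast {m : ℕ | 0 < m ∧ α i * w ^ m * (α i)⁻¹ ∈ H i} (o i)) :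
    ∀ y : FreeGroup (Fin n),
      ∑ i ∈ Finset.univ.filter (fun i : Fin s => ∃ j : ℤ, y * w ^ j * (α i)⁻¹ ∈ H i),
        oN / o i = oN := by
  intro y
  have hqpos : ∀ i, 0 < o i := fun i => (ho i).1.1
  have hle : ∀ i, IsLeast {m : ℕ | 0 < m ∧ (α i * w * (α i)⁻¹) ^ m ∈ H i} (o i) := by
    intro i; simpa only [conj_pow] using ho i
  have hnat : ∀ i (m : ℕ), α i * w ^ m * (α i)⁻¹ ∈ H i ↔ o i ∣ m := by
    intro i m
    simpa only [conj_pow] using pow_mem_iff_dvd' (hle i) m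
  have hint : ∀ i (m : ℤ), α i * w ^ m * (α i)⁻¹ ∈ H i ↔ (o i : ℤ) ∣ m := by
    intro i m
    simpa only [conj_zpow] using zpow_mem_iff_dvd' (hle i) m
  have hdvd : ∀ i, o i ∣ oN := by
    intro i
    have h1 := hoN.1.2
    rw [Subgroup.mem_iInf] at h1
    have h2 := h1 i
    rw [Subgroup.mem_iInf] at h2
    have h3 := h2 (α i)
    rw [Subgroup.mem_comap] at h3
    simp only [MulEquiv.coe_toMonoidHom, MulAut.conj_apply] at h3
    exact (hnat i oN).mp h3
  have hP : ∀ i (j j' : ℤ), y * w ^ j' * (α i)⁻¹ ∈ H i →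
      (y * w ^ j * (α i)⁻¹ ∈ H i ↔ (o i : ℤ) ∣ j - j') := by
    intro i j j' h
    have key : y * w ^ j * (α i)⁻¹ =
        (y * w ^ j' * (α i)⁻¹) * (α i * w ^ (j - j') * (α i)⁻¹) := by
      group
    rw [key, (H i).mul_mem_cancel_left h, hint]
  set J : Fin s → Finset ℕ :=
    fun i => (Finset.range oN).filter (fun j => y * w ^ (j : ℤ) * (α i)⁻¹ ∈ H i) with hJ
  have hcover : Finset.range oN =
      (Finset.univ.filter (fun i : Fin s => ∃ j : ℤ, y * w ^ j * (α i)⁻¹ ∈ H i)).biUnion J := by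
    ext j
    constructor
    · intro hjN
      obtain ⟨i, hi, -⟩ := hpart (y * w ^ j)
      have hpz : y * w ^ ((j : ℕ) : ℤ) * (α i)⁻¹ ∈ H i := by
        rw [zpow_natCast]; exact hi
      refine Finset.mem_biUnion.mpr ⟨i, ?_, ?_⟩
      · exact Finset.mem_filter.mpr ⟨Finset.mem_univ _, ⟨((j : ℕ) : ℤ), hpz⟩⟩
      · exact Finset.mem_filter.mpr ⟨hjN, hpz⟩
    · intro hj
      obtain ⟨i, -, hji⟩ := Finset.mem_biUnion.mp hj
      exact Finset.mem_of_mem_filter j hji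
  have hdisj : ∀ i ∈ Finset.univ.filter
        (fun i : Fin s => ∃ j : ℤ, y * w ^ j * (α i)⁻¹ ∈ H i),
      ∀ i' ∈ Finset.univ.filter
        (fun i : Fin s => ∃ j : ℤ, y * w ^ j * (α i)⁻¹ ∈ H i),
      i ≠ i' → Disjoint (J i) (J i') := by
    intro i _ i' _ hne
    rw [Finset.disjoint_left]
    intro j hji hji'
    simp only [hJ, Finset.mem_filter, Finset.mem_range] at hji hji'
    obtain ⟨i0, -, hu⟩ := hpart (y * w ^ j)
    have h1 : i = i0 := hu i (by rw [← zpow_natCast w j]; exact hji.2)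
    have h2 : i' = i0 := hu i' (by rw [← zpow_natCast w j]; exact hji'.2)
    exact hne (h1.trans h2.symm)
  have hcard : ∀ i ∈ Finset.univ.filter
      (fun i : Fin s => ∃ j : ℤ, y * w ^ j * (α i)⁻¹ ∈ H i),
      oN / o i = (J i).card := by
    intro i hi
    simp only [Finset.mem_filter, Finset.mem_univ, true_and] at hi
    obtain ⟨j0, hj0⟩ := hi
    have h0 : 0 ≤ j0 % (o i) := Int.emod_nonneg _ (by exact_mod_cast (hqpos i).ne')
    have hlt : j0 % (o i) < o i := Int.emod_lt_of_pos _ (by exact_mod_cast hqpos i)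
    set r : ℕ := (j0 % (o i)).toNat with hrdef
    have hr : r < o i := by omega
    have hchar : ∀ j : ℕ, (y * w ^ (j : ℤ) * (α i)⁻¹ ∈ H i) ↔ j % o i = r := by
      intro j
      rw [hP i j j0 hj0]
      have hcast : ((j % o i : ℕ) : ℤ) = (j : ℤ) % (o i) := by push_cast; ring
      rw [Int.dvd_iff_emod_eq_zero, ← Int.emod_eq_emod_iff_emod_sub_eq_zero]
      omega
    have hJeq : J i = (Finset.range oN).filter (fun j => j % o i = r) := by
      simp only [hJ]
      exact Finset.filter_congr (fun j _ => by rw [hchar j])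
    rw [hJeq]
    exact (card_filter_mod' (hqpos i) hr (hdvd i)).symm
  rw [Finset.sum_congr rfl hcard, ← Finset.card_biUnion hdisj, ← hcover, Finset.card_range]
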